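/- (Equation (18)) For all n, k ∈ ℕ with k ≤ n, the fermionic p-adic q-integral of x ↦ B_{k,n}(x,q) exists and ∫_{ℤ_p} B_{k,n}(x,q) dμ_{−q}(x) = C(n,k)·Σ_{l=0}^{n−k} C(n−k,l)·(−1)^l·ξ_{k+l,q}. -/

import Mathlib

open Finset Filter

/-- `[a]_q = (1 - q^a)/(1 - q)` for `a : ℤ`. -/
noncomputable def qnum {p : ℕ} [Fact p.Prime] (q : ℚ_[p]) (a : ℤ) : ℚ_[p] :=
  (1 - q ^ a) / (1 - q)

/-- Kim's q-Euler polynomial `ξ_{n,q}(x)` (closed form). -/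
noncomputable def xi {p : ℕ} [Fact p.Prime] (q : ℚ_[p]) (n : ℕ) (x : ℤ) : ℚ_[p] :=
  ((1 + q) / (1 - q) ^ n) *
    ∑ l ∈ Finset.range (n + 1),
      (n.choose l : ℚ_[p]) * (-1) ^ l * q ^ ((l : ℤ) * x) / (1 + q ^ (l + 1))

/-- The fermionic p-adic `r`-integral statement:
`∫_{ℤ_p} g dμ_{-r} = L` means the Riemann-type sums
`(1/[p^N]_{-r}) · Σ_{x=0}^{p^N-1} g(x) (-r)^x` converge to `L`. -/
def fermionicIntegral (p : ℕ) [Fact p.Prime] (r : ℚ_[p]) (g : ℕ → ℚ_[p]) (L : ℚ_[p]) : Prop :=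
  Filter.Tendsto
    (fun N : ℕ => ((1 + r) / (1 - (-r) ^ (p ^ N))) * ∑ x ∈ Finset.range (p ^ N), g x * (-r) ^ x)
    Filter.atTop (nhds L)

/-- The q-Bernstein polynomial `B_{k,n}(x,q) = C(n,k) [x]_q^k [1-x]_{1/q}^{n-k}`. -/
noncomputable def bern {p : ℕ} [Fact p.Prime] (q : ℚ_[p]) (k n : ℕ) (x : ℤ) : ℚ_[p] :=
  (n.choose k : ℚ_[p]) * (qnum q x) ^ k * (qnum q⁻¹ (1 - x)) ^ (n - k)

section Aux

variable {p : ℕ} [Fact p.Prime] {q : ℚ_[p]}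

lemma aux_norm_q_le_one (hq : ‖1 - q‖ < 1) : ‖q‖ ≤ 1 := by
  have h : q = 1 + -(1 - q) := by ring
  calc ‖q‖ = ‖(1:ℚ_[p]) + -(1 - q)‖ := by rw [← h]
    _ ≤ max ‖(1:ℚ_[p])‖ ‖-(1 - q)‖ := Padic.nonarchimedean _ _
    _ ≤ 1 := by rw [norm_neg, norm_one]; exact max_le le_rfl hq.le

lemma aux_norm_one_sub_pow (hq : ‖1 - q‖ < 1) (m : ℕ) : ‖1 - q ^ m‖ ≤ ‖1 - q‖ := by
  have h : 1 - q ^ m = (∑ i ∈ Finset.range m, q ^ i) * (1 - q) := by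
    have := geom_sum_mul q m
    have h2 : (∑ i ∈ Finset.range m, q ^ i) * (1 - q) = -((∑ i ∈ Finset.range m, q ^ i) * (q - 1)) := by ring
    rw [h2, this]; ring
  rw [h, norm_mul]
  have hsum : ‖∑ i ∈ Finset.range m, q ^ i‖ ≤ 1 := by
    apply IsUltrametricDist.norm_sum_le_of_forall_le_of_nonneg zero_le_one
    intro i _
    rw [norm_pow]
    exact pow_le_one₀ (norm_nonneg _) (aux_norm_q_le_one hq)
  calc ‖∑ i ∈ Finset.range m, q ^ i‖ * ‖1 - q‖ ≤ 1 * ‖1 - q‖ :=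
        mul_le_mul_of_nonneg_right hsum (norm_nonneg _)
    _ = ‖1 - q‖ := one_mul _

lemma aux_norm_two (hp : Odd p) : ‖(2 : ℚ_[p])‖ = 1 := by
  have hpp : p.Prime := Fact.out
  have h1 : ‖((2 : ℤ) : ℚ_[p])‖ ≤ 1 := Padic.norm_int_le_one 2
  have h2 : ¬ ‖((2 : ℤ) : ℚ_[p])‖ < 1 := by
    rw [Padic.norm_intCast_lt_one_iff]
    intro h
    have hle : (p : ℤ) ≤ 2 := Int.le_of_dvd (by norm_num) h
    have hne : p ≠ 2 := by
      intro h2'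
      rw [h2'] at hp
      exact (Nat.not_odd_iff_even.mpr (by norm_num)) hp
    have := hpp.two_le
    omega
  have : ((2 : ℤ) : ℚ_[p]) = (2 : ℚ_[p]) := by push_cast; ring
  rw [this] at h1 h2
  linarith [lt_or_eq_of_le h1, not_lt.mp h2]

lemma aux_one_add_pow_ne (hp : Odd p) (hq : ‖1 - q‖ < 1) (m : ℕ) : 1 + q ^ m ≠ 0 := by
  have hlt : ‖q ^ m - 1‖ < 1 := by rw [norm_sub_rev]; exact lt_of_le_of_lt (aux_norm_one_sub_pow hq m) hq
  have key : ‖1 + q ^ m‖ = 1 := by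
    have h : 1 + q ^ m = 2 + (q ^ m - 1) := by ring
    have hne : ‖(2:ℚ_[p])‖ ≠ ‖q ^ m - 1‖ := by rw [aux_norm_two hp]; exact ne_of_gt hlt
    rw [h, Padic.add_eq_max_of_ne hne, aux_norm_two hp, max_eq_left hlt.le]
  intro h0
  rw [h0, norm_zero] at key
  norm_num at key

end Aux

section Aux2

variable {p : ℕ} [Fact p.Prime] {q : ℚ_[p]}

lemma aux_step (hq : ‖1 - q‖ < 1) {u : ℚ_[p]} (hu : ‖1 - u‖ ≤ ‖1 - q‖) :
    ‖1 - u ^ p‖ ≤ max (p : ℝ)⁻¹ ‖1 - q‖ * ‖1 - u‖ := by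
  have hpp : p.Prime := Fact.out
  set c := max (p : ℝ)⁻¹ ‖1 - q‖ with hc
  have hc0 : (0:ℝ) ≤ c := le_trans (by positivity) (le_max_left _ _)
  have hu1 : ‖1 - u‖ < 1 := lt_of_le_of_lt hu hq
  have h2 : u ^ p = (∑ i ∈ Finset.range p, (u - 1) ^ (i + 1) * ((p.choose (i + 1) : ℚ_[p]))) + 1 := by
    conv_lhs => rw [show u = (u - 1) + 1 by ring, add_pow,
      Finset.sum_range_succ' (fun k => (u - 1) ^ k * (1:ℚ_[p]) ^ (p - k) * (p.choose k)) p]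
    simp
  have key : 1 - u ^ p = -∑ i ∈ Finset.range p, (u - 1) ^ (i + 1) * ((p.choose (i + 1) : ℚ_[p])) := by
    rw [h2]; ring
  rw [key, norm_neg]
  apply IsUltrametricDist.norm_sum_le_of_forall_le_of_nonneg (mul_nonneg hc0 (norm_nonneg _))
  intro i hi
  rw [Finset.mem_range] at hi
  rw [norm_mul, norm_pow, norm_sub_rev]
  by_cases hip : i + 1 = p
  · have hch : (p.choose (i + 1) : ℚ_[p]) = 1 := by rw [hip, Nat.choose_self]; norm_num
    rw [hch, norm_one, mul_one, hip]
    calc ‖1 - u‖ ^ p = ‖1 - u‖ ^ (p - 1) * ‖1 - u‖ := by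
          rw [← pow_succ]; congr 1; omega
      _ ≤ ‖1 - q‖ ^ (p - 1) * ‖1 - u‖ :=
          mul_le_mul_of_nonneg_right (pow_le_pow_left₀ (norm_nonneg _) hu _) (norm_nonneg _)
      _ ≤ ‖1 - q‖ * ‖1 - u‖ := by
          refine mul_le_mul_of_nonneg_right ?_ (norm_nonneg _)
          exact pow_le_of_le_one (norm_nonneg _) hq.le (by have := hpp.two_le; omega)
      _ ≤ c * ‖1 - u‖ := mul_le_mul_of_nonneg_right (le_max_right _ _) (norm_nonneg _)
  · have hdvd : p ∣ p.choose (i + 1) := hpp.dvd_choose_self (Nat.succ_ne_zero i) (by omega)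
    obtain ⟨d, hd⟩ := hdvd
    have hchn : ‖(p.choose (i + 1) : ℚ_[p])‖ ≤ (p : ℝ)⁻¹ := by
      rw [hd]
      push_cast
      rw [norm_mul, Padic.norm_p]
      have : ‖((d : ℤ) : ℚ_[p])‖ ≤ 1 := Padic.norm_int_le_one d
      push_cast at this
      calc (p:ℝ)⁻¹ * ‖(d : ℚ_[p])‖ ≤ (p:ℝ)⁻¹ * 1 := by
            exact mul_le_mul_of_nonneg_left this (by positivity)
        _ = (p:ℝ)⁻¹ := mul_one _
    have hbase : ‖1 - u‖ ^ (i + 1) ≤ ‖1 - u‖ := by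
      rw [pow_succ]
      calc ‖1 - u‖ ^ i * ‖1 - u‖ ≤ 1 * ‖1 - u‖ :=
            mul_le_mul_of_nonneg_right (pow_le_one₀ (norm_nonneg _) hu1.le) (norm_nonneg _)
        _ = ‖1 - u‖ := one_mul _
    calc ‖1 - u‖ ^ (i + 1) * ‖(p.choose (i + 1) : ℚ_[p])‖
        ≤ ‖1 - u‖ * (p : ℝ)⁻¹ :=
          mul_le_mul hbase hchn (norm_nonneg _) (norm_nonneg _)
      _ ≤ ‖1 - u‖ * c := mul_le_mul_of_nonneg_left (le_max_left _ _) (norm_nonneg _)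
      _ = c * ‖1 - u‖ := mul_comm _ _

lemma aux_tendsto (hq : ‖1 - q‖ < 1) : Tendsto (fun N : ℕ => q ^ (p ^ N)) atTop (nhds 1) := by
  have hpp : p.Prime := Fact.out
  set c := max (p : ℝ)⁻¹ ‖1 - q‖ with hc
  have hc0 : (0:ℝ) ≤ c := le_trans (by positivity) (le_max_left _ _)
  have hc1 : c < 1 := by
    apply max_lt _ hq
    rw [inv_lt_one_iff₀]
    right
    exact_mod_cast hpp.one_lt
  have bound : ∀ N, ‖1 - q ^ (p ^ N)‖ ≤ ‖1 - q‖ * c ^ N := by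
    intro N
    induction N with
    | zero => simp
    | succ N ih =>
      have hle : ‖1 - q ^ (p ^ N)‖ ≤ ‖1 - q‖ := by
        refine le_trans ih ?_
        calc ‖1 - q‖ * c ^ N ≤ ‖1 - q‖ * 1 :=
              mul_le_mul_of_nonneg_left (pow_le_one₀ hc0 hc1.le) (norm_nonneg _)
          _ = ‖1 - q‖ := mul_one _
      have hstep := aux_step hq hle
      have heq : q ^ (p ^ (N + 1)) = (q ^ (p ^ N)) ^ p := by
        rw [pow_succ, pow_mul]
      rw [heq]
      calc ‖1 - (q ^ (p ^ N)) ^ p‖ ≤ c * ‖1 - q ^ (p ^ N)‖ := hstep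
        _ ≤ c * (‖1 - q‖ * c ^ N) := mul_le_mul_of_nonneg_left ih hc0
        _ = ‖1 - q‖ * c ^ (N + 1) := by ring
  rw [tendsto_iff_norm_sub_tendsto_zero]
  refine squeeze_zero (g := fun N => ‖1 - q‖ * c ^ N) (fun N => norm_nonneg _)
    (fun N => by rw [norm_sub_rev]; exact bound N) ?_
  simpa using (tendsto_pow_atTop_nhds_zero_of_lt_one hc0 hc1).const_mul ‖1 - q‖

end Aux2

section Aux3

variable {p : ℕ} [Fact p.Prime] {q : ℚ_[p]}

lemma fint_sum {ι : Type*} (s : Finset ι) (g : ι → ℕ → ℚ_[p]) (L : ι → ℚ_[p])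
    (h : ∀ i ∈ s, fermionicIntegral p q (g i) (L i)) :
    fermionicIntegral p q (fun x => ∑ i ∈ s, g i x) (∑ i ∈ s, L i) := by
  unfold fermionicIntegral at *
  refine (tendsto_finset_sum s h).congr fun N => ?_
  rw [← Finset.mul_sum]
  congr 1
  rw [Finset.sum_comm]
  exact Finset.sum_congr rfl fun x _ => (Finset.sum_mul _ _ _).symm

lemma fint_const_mul (c : ℚ_[p]) {g : ℕ → ℚ_[p]} {L : ℚ_[p]}
    (h : fermionicIntegral p q g L) :
    fermionicIntegral p q (fun x => c * g x) (c * L) := by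
  unfold fermionicIntegral at *
  refine (h.const_mul c).congr fun N => ?_
  have hs : ∑ x ∈ Finset.range (p ^ N), (c * g x) * (-q) ^ x
      = c * ∑ x ∈ Finset.range (p ^ N), g x * (-q) ^ x := by
    rw [Finset.mul_sum]
    exact Finset.sum_congr rfl fun x _ => by ring
  rw [hs]
  ring

lemma fint_qpow (hp : Odd p) (hq : ‖1 - q‖ < 1) (m : ℕ) :
    fermionicIntegral p q (fun x => q ^ (m * x)) ((1 + q) / (1 + q ^ (m + 1))) := by
  have hpp : p.Prime := Fact.out
  have hm1 : (1 : ℚ_[p]) + q ^ (m + 1) ≠ 0 := aux_one_add_pow_ne hp hq (m + 1)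
  have hrne : -(q ^ (m + 1)) ≠ 1 := by
    intro h
    apply hm1
    rw [← h]; ring
  have hodd : ∀ N : ℕ, Odd (p ^ N) := fun N => hp.pow
  have hNne : ∀ N : ℕ, (1 : ℚ_[p]) + q ^ (p ^ N) ≠ 0 := fun N => aux_one_add_pow_ne hp hq _
  have key : ∀ N : ℕ, ((1 + q) / (1 - (-q) ^ (p ^ N))) *
      ∑ x ∈ Finset.range (p ^ N), q ^ (m * x) * (-q) ^ x
      = (1 + q) * (1 + (q ^ (p ^ N)) ^ (m + 1)) / ((1 + q ^ (p ^ N)) * (1 + q ^ (m + 1))) := by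
    intro N
    have hsum : ∑ x ∈ Finset.range (p ^ N), q ^ (m * x) * (-q) ^ x
        = ∑ x ∈ Finset.range (p ^ N), (-(q ^ (m + 1))) ^ x := by
      refine Finset.sum_congr rfl fun x _ => ?_
      rw [neg_pow, neg_pow (q ^ (m + 1)) x, ← pow_mul, add_mul, one_mul, pow_add]
      ring
    rw [hsum, geom_sum_eq hrne]
    have h1 : (-q) ^ (p ^ N) = -(q ^ (p ^ N)) := (hodd N).neg_pow q
    have h2 : (-(q ^ (m + 1))) ^ (p ^ N) = -((q ^ (p ^ N)) ^ (m + 1)) := by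
      rw [(hodd N).neg_pow, ← pow_mul, ← pow_mul, mul_comm]
    rw [h1, h2, sub_neg_eq_add]
    have h3 : (-((q ^ (p ^ N)) ^ (m + 1)) - 1) / (-(q ^ (m + 1)) - 1)
        = ((q ^ (p ^ N)) ^ (m + 1) + 1) / (q ^ (m + 1) + 1) := by
      rw [show -((q ^ (p ^ N)) ^ (m + 1)) - 1 = -((q ^ (p ^ N)) ^ (m + 1) + 1) by ring,
        show -(q ^ (m + 1)) - 1 = -(q ^ (m + 1) + 1) by ring, neg_div_neg_eq]
    rw [h3]
    have hm1' : q ^ (m + 1) + 1 ≠ 0 := by rw [add_comm]; exact hm1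
    field_simp
    ring
  refine Tendsto.congr (fun N => (key N).symm) ?_
  have hcont : ContinuousAt
      (fun u : ℚ_[p] => (1 + q) * (1 + u ^ (m + 1)) / ((1 + u) * (1 + q ^ (m + 1)))) 1 := by
    apply ContinuousAt.div
    · fun_prop
    · fun_prop
    · exact mul_ne_zero (by norm_num) hm1
  have hcomp := hcont.tendsto.comp (aux_tendsto hq)
  have hval : (1 + q) * (1 + (1 : ℚ_[p]) ^ (m + 1)) / ((1 + 1) * (1 + q ^ (m + 1)))
      = (1 + q) / (1 + q ^ (m + 1)) := by
    rw [one_pow]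
    rw [div_eq_div_iff (mul_ne_zero (by norm_num) hm1) hm1]
    ring
  rw [← hval]
  simpa [Function.comp_def] using hcomp

end Aux3

section Aux4

variable {p : ℕ} [Fact p.Prime] {q : ℚ_[p]}

lemma fint_qnum_pow (hp : Odd p) (hq : ‖1 - q‖ < 1) (hq1 : q ≠ 1) (m : ℕ) :
    fermionicIntegral p q (fun x => qnum q x ^ m) (xi q m 0) := by
  have h1q : (1 : ℚ_[p]) - q ≠ 0 := sub_ne_zero.mpr (Ne.symm hq1)
  have expand : (fun x : ℕ => qnum q (x : ℤ) ^ m)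
      = fun x : ℕ => ∑ j ∈ Finset.range (m + 1),
          ((m.choose j : ℚ_[p]) * (-1) ^ j / (1 - q) ^ m) * q ^ (j * x) := by
    funext x
    rw [qnum, zpow_natCast, div_pow]
    rw [show (1 : ℚ_[p]) - q ^ x = (-(q ^ x)) + 1 by ring, add_pow]
    rw [Finset.sum_div]
    refine Finset.sum_congr rfl fun j _ => ?_
    rw [neg_pow, mul_comm j x, pow_mul]
    ring
  have target : xi q m 0 = ∑ j ∈ Finset.range (m + 1),
      ((m.choose j : ℚ_[p]) * (-1) ^ j / (1 - q) ^ m) * ((1 + q) / (1 + q ^ (j + 1))) := by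
    rw [xi, Finset.mul_sum]
    refine Finset.sum_congr rfl fun j _ => ?_
    rw [show ((j : ℤ) * 0) = 0 by ring, zpow_zero]
    ring
  rw [expand, target]
  exact fint_sum _ _ _ fun j _ => fint_const_mul _ (fint_qpow hp hq j)

lemma qnum_compl (hq0 : q ≠ 0) (hq1 : q ≠ 1) (x : ℤ) :
    qnum q⁻¹ (1 - x) = 1 - qnum q x := by
  have h1q : (1 : ℚ_[p]) - q ≠ 0 := sub_ne_zero.mpr (Ne.symm hq1)
  rw [qnum, qnum]
  rw [inv_zpow, ← zpow_neg, neg_sub]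
  rw [zpow_sub₀ hq0, zpow_one]
  have hinv : (1 : ℚ_[p]) - q⁻¹ ≠ 0 := by
    rw [sub_ne_zero]
    intro h
    apply hq1
    rw [← inv_inv q, ← h, inv_one]
  rw [div_eq_iff hinv]
  field_simp
  ring

end Aux4

theorem stmt11 (p : ℕ) [Fact p.Prime] (hp : Odd p) (q : ℚ_[p]) (hq : ‖1 - q‖ < 1) (hq1 : q ≠ 1) (n k : ℕ) (hkn : k ≤ n) :
    fermionicIntegral p q (fun x => bern q k n x)
      ((n.choose k : ℚ_[p]) *
        ∑ l ∈ Finset.range (n - k + 1), ((n - k).choose l : ℚ_[p]) * (-1) ^ l * xi q (k + l) 0) := by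
  have hq0 : q ≠ 0 := by
    intro h
    rw [h, sub_zero, norm_one] at hq
    exact lt_irrefl _ hq
  have expand : (fun x : ℕ => bern q k n (x : ℤ))
      = fun x : ℕ => ∑ l ∈ Finset.range (n - k + 1),
          ((n.choose k : ℚ_[p]) * ((n - k).choose l : ℚ_[p]) * (-1) ^ l) * qnum q (x : ℤ) ^ (k + l) := by
    funext x
    rw [bern, qnum_compl hq0 hq1]
    rw [show (1 : ℚ_[p]) - qnum q (x : ℤ) = (-(qnum q (x : ℤ))) + 1 by ring, add_pow]
    rw [Finset.mul_sum]
    refine Finset.sum_congr rfl fun l _ => ?_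
    rw [neg_pow, pow_add]
    ring
  have target : (n.choose k : ℚ_[p]) *
      ∑ l ∈ Finset.range (n - k + 1), ((n - k).choose l : ℚ_[p]) * (-1) ^ l * xi q (k + l) 0
      = ∑ l ∈ Finset.range (n - k + 1),
          ((n.choose k : ℚ_[p]) * ((n - k).choose l : ℚ_[p]) * (-1) ^ l) * xi q (k + l) 0 := by
    rw [Finset.mul_sum]
    exact Finset.sum_congr rfl fun l _ => by ring
  rw [target, expand]
  exact fint_sum _ _ _ fun l _ => fint_const_mul _ (fint_qnum_pow hp hq hq1 (k + l))
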